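/- arXiv:1611.08138 — 2 statements merged into one kernel-verified Lean document; each statement's English description precedes it below -/
import Mathlib

section
/- Let B be a skew left brace and define γ_b(a) = ((b^{-1}·a^{-1}) ⋆ (b^{-1})^⋆)^{-1}. Then γ_a ∘ γ_b = γ_{b·a} for all a,b ∈ B, i.e. γ : (B,·) → Sym(B) is a group anti-homomorphism. -/
/-- A skew left brace: a set `B` with two group operations `star` and `mul`
(with their own identities and inverses) satisfying
`a · (b ⋆ c) = (a · b) ⋆ a^⋆ ⋆ (a · c)`. -/
structure SkewLeftBrace (B : Type*) where
  star : B → B → B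
  mul : B → B → B
  oneS : B
  oneM : B
  sinv : B → B
  minv : B → B
  star_assoc : ∀ a b c, star (star a b) c = star a (star b c)
  oneS_star : ∀ a, star oneS a = a
  star_oneS : ∀ a, star a oneS = a
  sinv_star : ∀ a, star (sinv a) a = oneS
  star_sinv : ∀ a, star a (sinv a) = oneS
  mul_assoc : ∀ a b c, mul (mul a b) c = mul a (mul b c)
  oneM_mul : ∀ a, mul oneM a = a
  mul_oneM : ∀ a, mul a oneM = a
  minv_mul : ∀ a, mul (minv a) a = oneM
  mul_minv : ∀ a, mul a (minv a) = oneM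
  compat : ∀ a b c, mul a (star b c) = star (mul a b) (star (sinv a) (mul a c))

/-- The lambda map `λ_a(b) = a^⋆ ⋆ (a · b)`. -/
def lam {B : Type*} (S : SkewLeftBrace B) (a b : B) : B :=
  S.star (S.sinv a) (S.mul a b)

/-- The gamma map `γ_b(a) = ((b⁻¹ · a⁻¹) ⋆ (b⁻¹)^⋆)⁻¹`. -/
def gam {B : Type*} (S : SkewLeftBrace B) (b a : B) : B :=
  S.minv (S.star (S.mul (S.minv b) (S.minv a)) (S.sinv (S.minv b)))

/-- The socle: elements `b` with `λ_b = id` and `a ⋆ b ⋆ a^⋆ = b` for all `a`. -/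
def Soc {B : Type*} (S : SkewLeftBrace B) : Set B :=
  {b | (∀ c, lam S b c = c) ∧ ∀ a, S.star (S.star a b) (S.sinv a) = b}

namespace SLBAux
variable {B : Type*} (S : SkewLeftBrace B)

lemma sinv_unique (z w : B) (h : S.star z w = S.oneS) : S.sinv z = w := by
  calc S.sinv z = S.star (S.sinv z) S.oneS := (S.star_oneS _).symm
    _ = S.star (S.sinv z) (S.star z w) := by rw [h]
    _ = S.star (S.star (S.sinv z) z) w := (S.star_assoc ..).symm
    _ = w := by rw [S.sinv_star, S.oneS_star]

lemma minv_unique (z w : B) (h : S.mul z w = S.oneM) : S.minv z = w := by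
  calc S.minv z = S.mul (S.minv z) S.oneM := (S.mul_oneM _).symm
    _ = S.mul (S.minv z) (S.mul z w) := by rw [h]
    _ = S.mul (S.mul (S.minv z) z) w := (S.mul_assoc ..).symm
    _ = w := by rw [S.minv_mul, S.oneM_mul]

lemma sinv_sinv (x : B) : S.sinv (S.sinv x) = x :=
  sinv_unique S _ _ (S.sinv_star x)

lemma minv_minv (x : B) : S.minv (S.minv x) = x :=
  minv_unique S _ _ (S.minv_mul x)

lemma sinv_star' (x y : B) : S.sinv (S.star x y) = S.star (S.sinv y) (S.sinv x) := by
  apply sinv_unique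
  rw [S.star_assoc, ← S.star_assoc y, S.star_sinv, S.oneS_star, S.star_sinv]

lemma minv_mul' (x y : B) : S.minv (S.mul x y) = S.mul (S.minv y) (S.minv x) := by
  apply minv_unique
  rw [S.mul_assoc, ← S.mul_assoc y, S.mul_minv, S.oneM_mul, S.mul_minv]

lemma sinv_oneM_eq_oneS : S.sinv S.oneM = S.oneS := by
  have h := S.compat S.oneM S.oneS S.oneS
  rw [S.oneM_mul, S.oneM_mul, S.oneS_star, S.oneS_star] at h
  -- h : S.oneS = S.star (S.sinv S.oneM) S.oneS
  rw [S.star_oneS] at h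
  exact h.symm

lemma oneS_eq_oneM : S.oneS = S.oneM := by
  have h := sinv_oneM_eq_oneS S
  have := sinv_sinv S S.oneM
  rw [h] at this
  have h2 : S.sinv S.oneS = S.oneS := sinv_unique S _ _ (S.oneS_star _)
  rw [h2] at this
  exact this

lemma mul_oneS (x : B) : S.mul x S.oneS = x := by
  rw [oneS_eq_oneM, S.mul_oneM]

lemma lam_star (x y z : B) : lam S x (S.star y z) = S.star (lam S x y) (lam S x z) := by
  simp only [lam, S.compat, S.star_assoc]

lemma lam_oneS (x : B) : lam S x S.oneS = S.oneS := by
  simp only [lam, mul_oneS, S.sinv_star]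

lemma lam_sinv (x y : B) : lam S x (S.sinv y) = S.sinv (lam S x y) := by
  symm
  apply sinv_unique
  rw [← lam_star, S.star_sinv, lam_oneS]

/-- Key identity: `A^⋆ ⋆ (A·Bb^⋆) ⋆ A^⋆ = (A·Bb)^⋆`. -/
lemma key (A Bb : B) :
    S.star (S.star (S.sinv A) (S.mul A (S.sinv Bb))) (S.sinv A)
      = S.sinv (S.mul A Bb) := by
  have h1 : S.star (S.sinv A) (S.mul A (S.sinv Bb)) = S.sinv (lam S A Bb) := by
    rw [← lam_sinv]; rfl
  rw [h1, lam, sinv_star', sinv_sinv, S.star_assoc, S.star_sinv, S.star_oneS]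

end SLBAux

open SLBAux in
theorem stmt_5 {B : Type*} (S : SkewLeftBrace B) (a b : B) :
    gam S a ∘ gam S b = gam S (S.mul b a) := by
  funext x
  simp only [Function.comp_apply, gam, minv_minv, minv_mul']
  congr 1
  rw [S.compat, S.star_assoc, ← S.mul_assoc, key]
end

section
/- Let B be a skew left brace. The socle Soc(B) is a normal subgroup of (B,·). -/
namespace SkewLeftBrace

variable {B : Type*} (S : SkewLeftBrace B)

lemma star_left_cancel {x y z : B} (h : S.star x y = S.star x z) : y = z := by
  have h2 := congrArg (S.star (S.sinv x)) h
  rwa [← S.star_assoc, ← S.star_assoc, S.sinv_star, S.oneS_star, S.oneS_star] at h2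

lemma eq_sinv_of_star {x y : B} (h : S.star x y = S.oneS) : y = S.sinv x :=
  S.star_left_cancel (by rw [h, S.star_sinv])

lemma sinv_sinv (x : B) : S.sinv (S.sinv x) = x :=
  (S.eq_sinv_of_star (S.sinv_star x)).symm

lemma sinv_star_eq (x y : B) :
    S.sinv (S.star x y) = S.star (S.sinv y) (S.sinv x) :=
  (S.eq_sinv_of_star (by
    rw [S.star_assoc, ← S.star_assoc y, S.star_sinv, S.oneS_star, S.star_sinv])).symm

lemma sinv_oneS : S.sinv S.oneS = S.oneS :=
  (S.eq_sinv_of_star (S.oneS_star S.oneS)).symm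

lemma mul_oneS (a : B) : S.mul a S.oneS = a := by
  have h := S.compat a S.oneS S.oneS
  rw [S.oneS_star] at h
  have h2 : S.star (S.mul a S.oneS) S.oneS
      = S.star (S.mul a S.oneS) (S.star (S.sinv a) (S.mul a S.oneS)) := by
    rw [S.star_oneS, ← h]
  have h3 : S.star (S.sinv a) (S.mul a S.oneS) = S.oneS :=
    (S.star_left_cancel h2).symm
  rw [S.eq_sinv_of_star h3, S.sinv_sinv]

lemma oneS_eq_oneM : S.oneS = S.oneM := by
  have h1 := S.mul_oneS S.oneM
  have h2 := S.oneM_mul S.oneS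
  rw [h2] at h1
  exact h1

lemma lam_star (a b c : B) :
    lam S a (S.star b c) = S.star (lam S a b) (lam S a c) := by
  unfold lam
  rw [S.compat, ← S.star_assoc]

lemma lam_oneS (a : B) : lam S a S.oneS = S.oneS := by
  unfold lam
  rw [S.mul_oneS, S.sinv_star]

lemma lam_sinv (a b : B) : lam S a (S.sinv b) = S.sinv (lam S a b) :=
  S.eq_sinv_of_star (by rw [← S.lam_star, S.star_sinv, S.lam_oneS])

lemma lam_mul (a b c : B) : lam S (S.mul a b) c = lam S a (lam S b c) := by
  have key : S.star (S.sinv a) (S.mul a (S.sinv b))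
      = S.star (S.sinv (S.mul a b)) a := by
    have h := S.lam_sinv a b
    unfold lam at h
    rw [h, S.sinv_star_eq, S.sinv_sinv]
  unfold lam
  rw [S.compat, ← S.star_assoc, key, S.star_assoc, ← S.star_assoc a,
    S.star_sinv, S.oneS_star, ← S.mul_assoc]

lemma mul_eq (a b : B) : S.mul a b = S.star a (lam S a b) := by
  unfold lam
  rw [← S.star_assoc, S.star_sinv, S.oneS_star]

lemma lam_oneM (c : B) : lam S S.oneM c = c := by
  unfold lam
  rw [S.oneM_mul, ← S.oneS_eq_oneM, S.sinv_oneS, S.oneS_star]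

lemma sinv_star_cancel (a z : B) : S.star (S.sinv a) (S.star a z) = z := by
  rw [← S.star_assoc, S.sinv_star, S.oneS_star]

lemma central_lam (b y : B)
    (hy : ∀ a, S.star (S.star a y) (S.sinv a) = y) (a : B) :
    S.star (S.star a (lam S b y)) (S.sinv a) = lam S b y := by
  have h1 : lam S b (lam S (S.minv b) a) = a := by
    rw [← S.lam_mul, S.mul_minv, S.lam_oneM]
  conv_lhs => rw [← h1]
  rw [← S.lam_sinv, ← S.lam_star, ← S.lam_star, hy]

end SkewLeftBrace

theorem stmt_12 {B : Type*} (S : SkewLeftBrace B) :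
    S.oneM ∈ Soc S ∧
      (∀ x y, x ∈ Soc S → y ∈ Soc S → S.mul x y ∈ Soc S) ∧
      (∀ x, x ∈ Soc S → S.minv x ∈ Soc S) ∧
      (∀ b y, y ∈ Soc S → S.mul (S.mul b y) (S.minv b) ∈ Soc S) := by
  refine ⟨⟨fun c => S.lam_oneM c, fun a => ?_⟩, fun x y hx hy => ⟨?_, ?_⟩,
    fun x hx => ⟨?_, ?_⟩, fun b y hy => ⟨?_, ?_⟩⟩
  · rw [← S.oneS_eq_oneM, S.star_oneS, S.star_sinv]
  · -- λ_{xy} = id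
    intro c
    rw [S.lam_mul, hy.1, hx.1]
  · -- xy central
    intro a
    have hxy : S.mul x y = S.star x y := by rw [S.mul_eq, hx.1]
    rw [hxy]
    conv_rhs => rw [← hx.2 a, ← hy.2 a]
    simp only [S.star_assoc, S.sinv_star_cancel]
  · -- λ_{x⁻¹} = id
    intro c
    have h2 : lam S x (lam S (S.minv x) c) = c := by
      rw [← S.lam_mul, S.mul_minv, S.lam_oneM]
    rw [hx.1 (lam S (S.minv x) c)] at h2
    exact h2
  · -- x⁻¹ central
    intro a
    have hlam : ∀ c, lam S (S.minv x) c = c := by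
      intro c
      have h2 : lam S x (lam S (S.minv x) c) = c := by
        rw [← S.lam_mul, S.mul_minv, S.lam_oneM]
      rw [hx.1 (lam S (S.minv x) c)] at h2
      exact h2
    have h4 : S.star (S.minv x) x = S.oneS := by
      have := S.mul_eq (S.minv x) x
      rw [hlam x, S.minv_mul, ← S.oneS_eq_oneM] at this
      exact this.symm
    have hminv : S.minv x = S.sinv x := by
      have h5 := congrArg S.sinv (S.eq_sinv_of_star h4)
      rw [S.sinv_sinv] at h5
      exact h5.symm
    rw [hminv]
    have h5 := congrArg S.sinv (hx.2 a)
    rw [S.sinv_star_eq, S.sinv_star_eq, S.sinv_sinv] at h5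
    rw [S.star_assoc]
    exact h5
  · -- λ_{byb⁻¹} = id
    intro c
    rw [S.lam_mul, S.lam_mul, hy.1, ← S.lam_mul, S.mul_minv, S.lam_oneM]
  · -- byb⁻¹ central
    intro a
    have hz : S.mul (S.mul b y) (S.minv b) = lam S b y := by
      rw [S.mul_assoc]
      have h1 : S.mul y (S.minv b) = S.star y (S.minv b) := by
        rw [S.mul_eq, hy.1]
      rw [h1, S.compat, S.mul_minv, ← S.oneS_eq_oneM, S.star_oneS, S.mul_eq b y]
      exact S.central_lam b y hy.2 b
    rw [hz]
    exact S.central_lam b y hy.2 a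
end
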